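/- arXiv:2002.08108 — 7 statements merged into one kernel-verified Lean document; each statement's English description precedes it below -/
import Mathlib

section
/- Every polymatroid arising from a collection of vector subspaces satisfies the Ingleton inequality: for all subsets A1, A2, A3, A4 of the ground set, f(A2:A3) ≤ f(A2:A3|A1) + f(A2:A3|A4) + f(A1:A4), where f(Y:Z|X) = f(X∪Y)+f(X∪Z)-f(X∪Y∪Z)-f(X) and f(Y:Z)=f(Y:Z|∅). -/
open Module Submodule

/-- Ingleton inequality for subspaces, in sup/inf form over ℕ. -/
lemma ingleton_finrank {F W : Type*} [Field F] [AddCommGroup W] [Module F W]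
    [FiniteDimensional F W] (B1 B2 B3 B4 : Submodule F W) :
    finrank F B2 + finrank F B3 + finrank F ↥(B1 ⊔ B2 ⊔ B3) +
      finrank F ↥(B4 ⊔ B2 ⊔ B3) + finrank F ↥(B1 ⊔ B4) ≤
    finrank F ↥(B1 ⊔ B2) + finrank F ↥(B1 ⊔ B3) + finrank F ↥(B2 ⊔ B3) +
      finrank F ↥(B4 ⊔ B2) + finrank F ↥(B4 ⊔ B3) := by
  -- modular equalities
  have e1 := Submodule.finrank_sup_add_finrank_inf_eq (B1 ⊔ B2) (B1 ⊔ B3)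
  have e4 := Submodule.finrank_sup_add_finrank_inf_eq (B4 ⊔ B2) (B4 ⊔ B3)
  have e23 := Submodule.finrank_sup_add_finrank_inf_eq B2 B3
  have e1T := Submodule.finrank_sup_add_finrank_inf_eq B1 (B2 ⊓ B3)
  have e4T := Submodule.finrank_sup_add_finrank_inf_eq B4 (B2 ⊓ B3)
  have e14 := Submodule.finrank_sup_add_finrank_inf_eq B1 B4
  have eS := Submodule.finrank_sup_add_finrank_inf_eq (B1 ⊓ (B2 ⊓ B3)) (B4 ⊓ (B2 ⊓ B3))
  -- rewriting sups
  have hsup1 : (B1 ⊔ B2) ⊔ (B1 ⊔ B3) = B1 ⊔ B2 ⊔ B3 := by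
    rw [sup_sup_sup_comm, sup_idem, sup_assoc]
  have hsup4 : (B4 ⊔ B2) ⊔ (B4 ⊔ B3) = B4 ⊔ B2 ⊔ B3 := by
    rw [sup_sup_sup_comm, sup_idem, sup_assoc]
  rw [hsup1] at e1
  rw [hsup4] at e4
  -- monotonicity facts
  have m1 : finrank F ↥(B1 ⊔ B2 ⊓ B3) ≤ finrank F ↥((B1 ⊔ B2) ⊓ (B1 ⊔ B3)) :=
    Submodule.finrank_mono
      (le_inf (sup_le_sup_left inf_le_left _) (sup_le_sup_left inf_le_right _))
  have m4 : finrank F ↥(B4 ⊔ B2 ⊓ B3) ≤ finrank F ↥((B4 ⊔ B2) ⊓ (B4 ⊔ B3)) :=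
    Submodule.finrank_mono
      (le_inf (sup_le_sup_left inf_le_left _) (sup_le_sup_left inf_le_right _))
  have mS1 : finrank F ↥((B1 ⊓ (B2 ⊓ B3)) ⊔ (B4 ⊓ (B2 ⊓ B3))) ≤ finrank F ↥(B2 ⊓ B3) :=
    Submodule.finrank_mono (sup_le inf_le_right inf_le_right)
  have mS2 : finrank F ↥((B1 ⊓ (B2 ⊓ B3)) ⊓ (B4 ⊓ (B2 ⊓ B3))) ≤ finrank F ↥(B1 ⊓ B4) :=
    Submodule.finrank_mono
      (le_inf (le_trans inf_le_left inf_le_left) (le_trans inf_le_right inf_le_left))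
  omega

/-- Every linear polymatroid (arising from a collection of vector subspaces)
satisfies the Ingleton inequality
`f(A2:A3) ≤ f(A2:A3|A1) + f(A2:A3|A4) + f(A1:A4)`. -/
theorem linear_polymatroid_ingleton
    {α F W : Type*} [Fintype α] [DecidableEq α]
    [Field F] [AddCommGroup W] [Module F W] [FiniteDimensional F W]
    (V : α → Submodule F W)
    (f : Finset α → ℝ)
    (hf : ∀ X : Finset α, f X = (Module.finrank F ↥(⨆ x ∈ X, V x) : ℝ))
    (A1 A2 A3 A4 : Finset α) :
    f A2 + f A3 - f (A2 ∪ A3) ≤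
      (f (A1 ∪ A2) + f (A1 ∪ A3) - f (A1 ∪ A2 ∪ A3) - f A1) +
      (f (A4 ∪ A2) + f (A4 ∪ A3) - f (A4 ∪ A2 ∪ A3) - f A4) +
      (f A1 + f A4 - f (A1 ∪ A4)) := by
  have hU : ∀ s t : Finset α, (⨆ x ∈ s ∪ t, V x) = (⨆ x ∈ s, V x) ⊔ ⨆ x ∈ t, V x :=
    fun s t => Finset.iSup_union
  simp only [hf]
  rw [hU (A1 ∪ A2) A3, hU (A4 ∪ A2) A3, hU A2 A3, hU A1 A2, hU A1 A3,
    hU A4 A2, hU A4 A3, hU A1 A4]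
  set B1 := ⨆ x ∈ A1, V x
  set B2 := ⨆ x ∈ A2, V x
  set B3 := ⨆ x ∈ A3, V x
  set B4 := ⨆ x ∈ A4, V x
  have key := ingleton_finrank B1 B2 B3 B4
  have : ((finrank F B2 : ℝ) + finrank F B3 + finrank F ↥(B1 ⊔ B2 ⊔ B3) +
      finrank F ↥(B4 ⊔ B2 ⊔ B3) + finrank F ↥(B1 ⊔ B4) : ℝ) ≤
      (finrank F ↥(B1 ⊔ B2) + finrank F ↥(B1 ⊔ B3) + finrank F ↥(B2 ⊔ B3) +
      finrank F ↥(B4 ⊔ B2) + finrank F ↥(B4 ⊔ B3) : ℝ) := by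
    exact_mod_cast key
  linarith
end

section
/- Let (Q,f) be a linear polymatroid given by subspaces (V_x)_{x∈Q} of a finite-dimensional vector space V over a field F, and let A, B ⊆ Q. Extending the collection by the subspace V_{x_o} = V_A ∩ V_B gives a linear polymatroid (Q∪{x_o}, f) extending (Q,f) in which x_o is a common information for the pair (A,B), i.e., f(x_o|A) = f(x_o|B) = 0 and f(x_o) = f(A:B). -/
/-- Extending a linear polymatroid, given by subspaces `(V_x)_{x∈Q}`, by the
subspace `V_{x_o} = V_A ⊓ V_B` gives a linear polymatroid extending `(Q,f)` in
which `x_o` is a common information for the pair `(A,B)`: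
`f(x_o|A) = f(x_o|B) = 0` and `f(x_o) = f(A:B)`. Here the extended ground set
`Q ∪ {x_o}` is modelled by `Option α`, with `x_o = none`. -/
theorem linear_common_information
    {α F W : Type*} [Fintype α] [DecidableEq α]
    [Field F] [AddCommGroup W] [Module F W] [FiniteDimensional F W]
    (V : α → Submodule F W) (A B : Finset α)
    (f : Finset α → ℝ)
    (hf : ∀ X : Finset α, f X = (Module.finrank F ↥(⨆ x ∈ X, V x) : ℝ))
    (V' : Option α → Submodule F W)
    (hV'some : ∀ x : α, V' (some x) = V x)
    (hV'none : V' none = (⨆ x ∈ A, V x) ⊓ (⨆ x ∈ B, V x))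
    (f' : Finset (Option α) → ℝ)
    (hf' : ∀ X : Finset (Option α), f' X = (Module.finrank F ↥(⨆ o ∈ X, V' o) : ℝ)) :
    (∀ X : Finset α, f' (X.image some) = f X) ∧
    f' (insert none (A.image some)) - f' (A.image some) = 0 ∧
    f' (insert none (B.image some)) - f' (B.image some) = 0 ∧
    f' {none} = f A + f B - f (A ∪ B) := by
  have himg : ∀ X : Finset α, (⨆ o ∈ X.image some, V' o) = ⨆ x ∈ X, V x := by
    intro X
    rw [← Finset.sup_eq_iSup, Finset.sup_image, ← Finset.sup_eq_iSup]
    exact Finset.sup_congr rfl fun x _ => hV'some x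
  have hrestrict : ∀ X : Finset α, f' (X.image some) = f X := by
    intro X
    rw [hf', hf, himg]
  have hins : ∀ X : Finset α, V' none ≤ ⨆ x ∈ X, V x →
      f' (insert none (X.image some)) - f' (X.image some) = 0 := by
    intro X hle
    rw [hf', hf', Finset.iSup_insert, himg, sup_eq_right.mpr hle, sub_self]
  refine ⟨hrestrict, hins A (hV'none ▸ inf_le_left),
    hins B (hV'none ▸ inf_le_right), ?_⟩
  have hU : (⨆ x ∈ A ∪ B, V x) = (⨆ x ∈ A, V x) ⊔ ⨆ x ∈ B, V x := by
    rw [← Finset.sup_eq_iSup, Finset.sup_union, ← Finset.sup_eq_iSup, ← Finset.sup_eq_iSup]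
  rw [hf', hf, hf, hf, hU]
  have hsing : (⨆ o ∈ ({none} : Finset (Option α)), V' o) =
      (⨆ x ∈ A, V x) ⊓ ⨆ x ∈ B, V x := by
    simp [hV'none]
  rw [hsing]
  have := Submodule.finrank_sup_add_finrank_inf_eq (⨆ x ∈ A, V x) (⨆ x ∈ B, V x)
  have h2 := congrArg (Nat.cast (R := ℝ)) this
  push_cast at h2
  linarith
end

section
/- Let (Q',f) be a polymatroid extending (Q,f), and let U, V, Z ⊆ Q. If x_o ∈ Q' is a common information for the pair (U∪V, Z), i.e., f(x_o|U∪V) = f(x_o|Z) = 0 and f(x_o) = f(U∪V : Z), then x_o is an AK-information for the triple (U,V,Z): f(x_o|U∪V) = 0, f(U|x_o) = f(U|Z), f(V|x_o) = f(V|Z), and f(U∪V|x_o) = f(U∪V|Z). -/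
/-- If `x_o` is a common information for the pair `(U∪V, Z)` in a polymatroid,
then `x_o` is an AK-information for the triple `(U,V,Z)`. -/
theorem common_information_is_AK_information
    {α : Type*} [DecidableEq α] [Fintype α]
    (f : Finset α → ℝ)
    (hempty : f ∅ = 0)
    (hmono : ∀ X Y : Finset α, X ⊆ Y → f X ≤ f Y)
    (hsubmod : ∀ X Y : Finset α, f (X ∩ Y) + f (X ∪ Y) ≤ f X + f Y)
    (U V Z : Finset α) (xo : α)
    -- (C1): f(x_o | U∪V) = 0 and f(x_o | Z) = 0
    (hC1a : f (insert xo (U ∪ V)) - f (U ∪ V) = 0)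
    (hC1b : f (insert xo Z) - f Z = 0)
    -- (C2): f(x_o) = f(U∪V : Z)
    (hC2 : f {xo} = f (U ∪ V) + f Z - f (U ∪ V ∪ Z)) :
    -- (AK1): f(x_o | U∪V) = 0
    f (insert xo (U ∪ V)) - f (U ∪ V) = 0 ∧
    -- (AK2): f(U | x_o) = f(U | Z) and f(V | x_o) = f(V | Z)
    f (insert xo U) - f {xo} = f (Z ∪ U) - f Z ∧
    f (insert xo V) - f {xo} = f (Z ∪ V) - f Z ∧
    -- (AK3): f(U∪V | x_o) = f(U∪V | Z)
    f (insert xo (U ∪ V)) - f {xo} = f (Z ∪ (U ∪ V)) - f Z := by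
  -- f(xo | A ∪ Z) = 0 for any A, since f(xo | Z) = 0
  have hZ0 : ∀ A : Finset α, f (insert xo (A ∪ Z)) = f (A ∪ Z) := by
    intro A
    have hs := hsubmod (insert xo Z) (A ∪ Z)
    have hu : (insert xo Z) ∪ (A ∪ Z) = insert xo (A ∪ Z) := by
      ext a; simp; tauto
    have hi : f Z ≤ f ((insert xo Z) ∩ (A ∪ Z)) := by
      apply hmono
      intro a ha
      simp [Finset.mem_insert, ha]
    have hm : f (A ∪ Z) ≤ f (insert xo (A ∪ Z)) := hmono _ _ (Finset.subset_insert _ _)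
    rw [hu] at hs
    linarith
  -- diminishing returns given f(xo | A∪Z) = 0 : for A ⊆ B,
  -- f(B∪Z) - f(A∪Z) ≤ f(insert xo B) - f(insert xo A)
  have hB : ∀ A B : Finset α, A ⊆ B →
      f (B ∪ Z) - f (A ∪ Z) ≤ f (insert xo B) - f (insert xo A) := by
    intro A B hAB
    have hs := hsubmod (insert xo B) (insert xo (A ∪ Z))
    have hu : (insert xo B) ∪ (insert xo (A ∪ Z)) = insert xo (B ∪ Z) := by
      ext a
      have hab := @Finset.mem_of_subset _ A B a hAB
      simp at hab ⊢
      tauto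
    have hi : f (insert xo A) ≤ f ((insert xo B) ∩ (insert xo (A ∪ Z))) := by
      apply hmono
      intro a ha
      simp at ha ⊢
      rcases ha with h | h
      · tauto
      · exact Or.inr ⟨Or.inr (hAB h), Or.inl h⟩
    have hm : f (B ∪ Z) ≤ f (insert xo (B ∪ Z)) := hmono _ _ (Finset.subset_insert _ _)
    have hz := hZ0 A
    rw [hu] at hs
    linarith
  have h1 := hB ∅ U (Finset.empty_subset U)
  have h2 := hB U (U ∪ V) Finset.subset_union_left
  have h3 := hB ∅ V (Finset.empty_subset V)
  have h4 := hB V (U ∪ V) Finset.subset_union_right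
  rw [Finset.empty_union, Finset.insert_empty] at h1 h3
  have e1 : f (Z ∪ U) = f (U ∪ Z) := by rw [Finset.union_comm]
  have e2 : f (Z ∪ V) = f (V ∪ Z) := by rw [Finset.union_comm]
  have e3 : f (Z ∪ (U ∪ V)) = f (U ∪ V ∪ Z) := by rw [Finset.union_comm]
  refine ⟨hC1a, ?_, ?_, ?_⟩ <;> linarith
end

section
/- If a polymatroid (Q,f) is 1-CI-compliant (for every pair (A,B) of subsets of Q there is an extension (Q∪{x_o},f) in which x_o is a common information for (A,B)), then f satisfies the Ingleton inequality: for all A1,A2,A3,A4 ⊆ Q, f(A2:A3) ≤ f(A2:A3|A1) + f(A2:A3|A4) + f(A1:A4). -/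
/-- If a polymatroid `(Q,f)` is 1-CI-compliant (for every pair `(A,B)` of
subsets of `Q` there is a polymatroid extension by a new point `x_o` -- modelled
here via `Option α`, with `x_o = none` -- in which `x_o` is a common
information for `(A,B)`), then `f` satisfies the Ingleton inequality. -/
theorem one_CI_compliant_ingleton
    {α : Type*} [DecidableEq α] [Fintype α]
    (f : Finset α → ℝ)
    (hempty : f ∅ = 0)
    (hmono : ∀ X Y : Finset α, X ⊆ Y → f X ≤ f Y)
    (hsubmod : ∀ X Y : Finset α, f (X ∩ Y) + f (X ∪ Y) ≤ f X + f Y)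
    (hCI : ∀ A B : Finset α, ∃ f' : Finset (Option α) → ℝ,
      f' ∅ = 0 ∧
      (∀ X Y : Finset (Option α), X ⊆ Y → f' X ≤ f' Y) ∧
      (∀ X Y : Finset (Option α), f' (X ∩ Y) + f' (X ∪ Y) ≤ f' X + f' Y) ∧
      (∀ X : Finset α, f' (X.image some) = f X) ∧
      f' (insert none (A.image some)) = f' (A.image some) ∧
      f' (insert none (B.image some)) = f' (B.image some) ∧
      f' {none} = f A + f B - f (A ∪ B)) :
    ∀ A1 A2 A3 A4 : Finset α,
      f A2 + f A3 - f (A2 ∪ A3) ≤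
        (f (A1 ∪ A2) + f (A1 ∪ A3) - f (A1 ∪ A2 ∪ A3) - f A1) +
        (f (A4 ∪ A2) + f (A4 ∪ A3) - f (A4 ∪ A2 ∪ A3) - f A4) +
        (f A1 + f A4 - f (A1 ∪ A4)) := by
  intro A1 A2 A3 A4
  obtain ⟨f', h0, hm, hs, him, h2, h3, hz⟩ := hCI A2 A3
  have key : ∀ W : Finset α,
      f' (insert none (W.image some)) ≤ f (W ∪ A2) + f (W ∪ A3) - f (W ∪ A2 ∪ A3) := by
    intro W
    have hii : f' (insert none (W.image some ∪ A2.image some)) ≤ f (W ∪ A2) := by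
      have hsub := hs (W.image some ∪ A2.image some) (insert none (A2.image some))
      have hmI : f' (A2.image some) ≤
          f' ((W.image some ∪ A2.image some) ∩ insert none (A2.image some)) := by
        apply hm
        intro x hx
        simp only [Finset.mem_inter, Finset.mem_union, Finset.mem_insert]
        exact ⟨Or.inr hx, Or.inr hx⟩
      have hU : (W.image some ∪ A2.image some) ∪ insert none (A2.image some)
          = insert none (W.image some ∪ A2.image some) := by
        ext x
        simp only [Finset.mem_union, Finset.mem_insert]
        tauto
      rw [hU] at hsub
      have he1 := him (W ∪ A2)
      rw [Finset.image_union] at he1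
      linarith [h2]
    have hiii : f' (insert none (W.image some ∪ A3.image some)) ≤ f (W ∪ A3) := by
      have hsub := hs (W.image some ∪ A3.image some) (insert none (A3.image some))
      have hmI : f' (A3.image some) ≤
          f' ((W.image some ∪ A3.image some) ∩ insert none (A3.image some)) := by
        apply hm
        intro x hx
        simp only [Finset.mem_inter, Finset.mem_union, Finset.mem_insert]
        exact ⟨Or.inr hx, Or.inr hx⟩
      have hU : (W.image some ∪ A3.image some) ∪ insert none (A3.image some)
          = insert none (W.image some ∪ A3.image some) := by
        ext x
        simp only [Finset.mem_union, Finset.mem_insert]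
        tauto
      rw [hU] at hsub
      have he1 := him (W ∪ A3)
      rw [Finset.image_union] at he1
      linarith [h3]
    have hi := hs (insert none (W.image some ∪ A2.image some))
      (insert none (W.image some ∪ A3.image some))
    have hmI : f' (insert none (W.image some)) ≤
        f' (insert none (W.image some ∪ A2.image some) ∩
            insert none (W.image some ∪ A3.image some)) := by
      apply hm
      intro x hx
      simp only [Finset.mem_insert] at hx
      simp only [Finset.mem_inter, Finset.mem_insert, Finset.mem_union]
      tauto
    have hU : insert none (W.image some ∪ A2.image some) ∪
          insert none (W.image some ∪ A3.image some)
        = insert none (W.image some ∪ A2.image some ∪ A3.image some) := by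
      ext x
      simp only [Finset.mem_union, Finset.mem_insert]
      tauto
    rw [hU] at hi
    have hiv : f (W ∪ A2 ∪ A3) ≤
        f' (insert none (W.image some ∪ A2.image some ∪ A3.image some)) := by
      have he := him (W ∪ A2 ∪ A3)
      rw [Finset.image_union, Finset.image_union] at he
      rw [← he]
      exact hm _ _ (Finset.subset_insert _ _)
    linarith
  have k1 := key A1
  have k4 := key A4
  have hfinal := hs (insert none (A1.image some)) (insert none (A4.image some))
  have hmI : f' {none} ≤ f' (insert none (A1.image some) ∩ insert none (A4.image some)) := by
    apply hm
    intro x hx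
    simp only [Finset.mem_singleton] at hx
    simp only [Finset.mem_inter, Finset.mem_insert]
    exact ⟨Or.inl hx, Or.inl hx⟩
  have hU : insert none (A1.image some) ∪ insert none (A4.image some)
      = insert none (A1.image some ∪ A4.image some) := by
    ext x
    simp only [Finset.mem_union, Finset.mem_insert]
    tauto
  rw [hU] at hfinal
  have hmU : f (A1 ∪ A4) ≤ f' (insert none (A1.image some ∪ A4.image some)) := by
    have he := him (A1 ∪ A4)
    rw [Finset.image_union] at he
    rw [← he]
    exact hm _ _ (Finset.subset_insert _ _)
  linarith
end

section
/- Let Γ be the port at p_o of a matroid M = (Q,r), with Γ perfect. Then the dual access function Γ*, defined by Γ*(X) = 1 - Γ(P∖X) where P = Q∖{p_o}, equals the port of the dual matroid M* at p_o. -/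
open Finset

/-- If `Γ` is the (perfect) port at `p_o` of a matroid `M = (Q,r)`, then the
dual access function `Γ*(X) = 1 - Γ(P∖X)` (where `P = Q∖{p_o}`) equals the port
of the dual matroid `M*` (with rank `r*(X) = |X| - r(Q) + r(Q∖X)`) at `p_o`. -/
theorem dual_port_eq_port_of_dual
    {α : Type*} [DecidableEq α] [Fintype α]
    (r : Finset α → ℤ)
    (hempty : r ∅ = 0)
    (hmono : ∀ X Y : Finset α, X ⊆ Y → r X ≤ r Y)
    (hsubmod : ∀ X Y : Finset α, r (X ∩ Y) + r (X ∪ Y) ≤ r X + r Y)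
    (hcard : ∀ X : Finset α, r X ≤ X.card)
    (po : α)
    (hpo : r {po} = 1)
    (hall : r (univ \ {po}) = r univ)
    (Γ : Finset α → ℤ)
    (hΓ : ∀ X : Finset α, Γ X = r X + r {po} - r (X ∪ {po}))
    (hperfect : ∀ X : Finset α, X ⊆ univ \ {po} → Γ X = 0 ∨ Γ X = 1)
    (rd : Finset α → ℤ)
    (hrd : ∀ X : Finset α, rd X = (X.card : ℤ) - r univ + r (univ \ X)) :
    ∀ X : Finset α, X ⊆ univ \ {po} →
      1 - Γ ((univ \ {po}) \ X) = rd X + rd {po} - rd (X ∪ {po}) := by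
  intro X hX
  have hpoX : po ∉ X := by
    intro h
    have := hX h
    simp at this
  have h1 : univ \ (X ∪ {po}) = (univ \ {po}) \ X := by
    ext a; simp
  have h2 : univ \ X = ((univ \ {po}) \ X) ∪ {po} := by
    ext a
    by_cases ha : a = po <;> simp [ha, hpoX]
  have hc : ((X ∪ {po}).card : ℤ) = (X.card : ℤ) + 1 := by
    rw [card_union_of_disjoint (by simp [hpoX])]
    simp
  rw [hΓ, hrd, hrd, hrd, h1, h2, hpo, hall, hc]
  simp only [card_singleton, Nat.cast_one]
  ring
end

section
/- Every rank-3 flat structure from a matroid extendable to a modular matroid is CI-compliant; specifically, if a matroid (Q,r) has a modular extension (Q',r), then for every pair (A,B) of subsets of Q the element (or flat) computed as the intersection of the closures of A and B in the modular extension is a common information for (A,B): r(X_o|A) = r(X_o|B) = 0 and r(X_o) = r(A:B), where X_o is the intersection of the flats spanned by A and B. -/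
open Finset

lemma span_lemma {β : Type*} [DecidableEq β] (r : Finset β → ℤ)
    (hmono : ∀ X Y : Finset β, X ⊆ Y → r X ≤ r Y)
    (hsubmod : ∀ X Y : Finset β, r (X ∩ Y) + r (X ∪ Y) ≤ r X + r Y)
    (A : Finset β) (Y : Finset β) (h : ∀ x ∈ Y, r (insert x A) = r A) :
    r (A ∪ Y) = r A := by
  induction Y using Finset.induction_on with
  | empty => simp
  | @insert y Y hy ih =>
    have h1 : r (A ∪ Y) = r A := ih (fun x hx => h x (mem_insert_of_mem hx))
    have h2 : r (insert y A) = r A := h y (mem_insert_self y Y)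
    have hs := hsubmod (A ∪ Y) (insert y A)
    have hinter : A ⊆ (A ∪ Y) ∩ insert y A := by
      intro x hx; exact mem_inter.mpr ⟨mem_union_left _ hx, mem_insert_of_mem hx⟩
    have h3 : r A ≤ r ((A ∪ Y) ∩ insert y A) := hmono _ _ hinter
    have hun : (A ∪ Y) ∪ insert y A = A ∪ insert y Y := by
      ext x; simp [mem_union, mem_insert]; tauto
    rw [hun] at hs
    have h4 : r A ≤ r (A ∪ insert y Y) := hmono _ _ subset_union_left
    linarith

/-- If a matroid `(Q,r)` has a modular extension `(Q',r)` (here the extension is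
the matroid on the whole ground type, and `Q` is a subset of it), then for
every pair `(A,B)` of subsets of `Q`, the intersection `X_o` of the flats
spanned by `A` and `B` in the modular extension is a common information for
`(A,B)`: `r(X_o|A) = r(X_o|B) = 0` and `r(X_o) = r(A:B)`. -/
theorem modular_extension_common_information
    {β : Type*} [DecidableEq β] [Fintype β]
    (Q : Finset β) (r : Finset β → ℤ)
    (hempty : r ∅ = 0)
    (hmono : ∀ X Y : Finset β, X ⊆ Y → r X ≤ r Y)
    (hsubmod : ∀ X Y : Finset β, r (X ∩ Y) + r (X ∪ Y) ≤ r X + r Y)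
    (hcard : ∀ X : Finset β, r X ≤ X.card)
    -- the extension is modular: every pair of flats is a modular pair
    (hmodular : ∀ A B : Finset β,
      (∀ x ∉ A, r A < r (insert x A)) → (∀ x ∉ B, r B < r (insert x B)) →
      r A + r B = r (A ∪ B) + r (A ∩ B))
    (A B : Finset β) (hA : A ⊆ Q) (hB : B ⊆ Q)
    (cl : Finset β → Finset β)
    (hcl : ∀ X : Finset β, cl X = univ.filter (fun x => r (insert x X) = r X)) :
    r (A ∪ (cl A ∩ cl B)) - r A = 0 ∧
    r (B ∪ (cl A ∩ cl B)) - r B = 0 ∧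
    r (cl A ∩ cl B) = r A + r B - r (A ∪ B) := by
  have hmem : ∀ (X : Finset β) (x : β), x ∈ cl X ↔ r (insert x X) = r X := by
    intro X x; rw [hcl]; simp
  have hclsub : ∀ X : Finset β, X ⊆ cl X := by
    intro X x hx
    rw [hmem]
    rw [insert_eq_self.mpr hx]
  have hclr : ∀ X : Finset β, r (cl X) = r X := by
    intro X
    have := span_lemma r hmono hsubmod X (cl X) (fun x hx => (hmem X x).mp hx)
    rwa [union_eq_right.mpr (hclsub X)] at this
  have hflat : ∀ (X : Finset β), ∀ x ∉ cl X, r (cl X) < r (insert x (cl X)) := by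
    intro X x hx
    have hne : r (insert x X) ≠ r X := fun h => hx ((hmem X x).mpr h)
    have h1 : r X ≤ r (insert x X) := hmono _ _ (subset_insert _ _)
    have h2 : r (insert x X) ≤ r (insert x (cl X)) :=
      hmono _ _ (insert_subset_insert _ (hclsub X))
    rw [hclr]
    omega
  have hclU : ∀ X Y : Finset β, cl X ⊆ cl (X ∪ Y) := by
    intro X Y x hx
    rw [hmem] at hx ⊢
    have hs := hsubmod (insert x X) (X ∪ Y)
    have hinter : X ⊆ insert x X ∩ (X ∪ Y) := by
      intro y hy; exact mem_inter.mpr ⟨mem_insert_of_mem hy, mem_union_left _ hy⟩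
    have h3 : r X ≤ r (insert x X ∩ (X ∪ Y)) := hmono _ _ hinter
    have hun : insert x X ∪ (X ∪ Y) = insert x (X ∪ Y) := by
      ext y; simp [mem_union, mem_insert]
    rw [hun] at hs
    have h4 : r (X ∪ Y) ≤ r (insert x (X ∪ Y)) := hmono _ _ (subset_insert _ _)
    omega
  -- rank of cl A ∪ cl B equals r (A ∪ B)
  have hsub1 : A ∪ B ⊆ cl A ∪ cl B := union_subset_union (hclsub A) (hclsub B)
  have hsub2 : cl A ∪ cl B ⊆ cl (A ∪ B) := by
    apply union_subset (hclU A B)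
    have := hclU B A
    rwa [union_comm B A] at this
  have hrU : r (cl A ∪ cl B) = r (A ∪ B) := by
    have h1 := hmono _ _ hsub1
    have h2 := hmono _ _ hsub2
    rw [hclr] at h2
    omega
  have hmod := hmodular (cl A) (cl B) (hflat A) (hflat B)
  rw [hrU, hclr, hclr] at hmod
  -- first goal : A ∪ (cl A ∩ cl B) ⊆ cl A
  have hgA : r (A ∪ (cl A ∩ cl B)) = r A := by
    have h1 : A ∪ (cl A ∩ cl B) ⊆ cl A :=
      union_subset (hclsub A) inter_subset_left
    have h2 := hmono _ _ h1
    rw [hclr] at h2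
    have h3 := hmono _ _ (subset_union_left : A ⊆ A ∪ (cl A ∩ cl B))
    omega
  have hgB : r (B ∪ (cl A ∩ cl B)) = r B := by
    have h1 : B ∪ (cl A ∩ cl B) ⊆ cl B :=
      union_subset (hclsub B) inter_subset_right
    have h2 := hmono _ _ h1
    rw [hclr] at h2
    have h3 := hmono _ _ (subset_union_left : B ⊆ B ∪ (cl A ∩ cl B))
    omega
  exact ⟨by omega, by omega, by omega⟩
end

section
/- In a polymatroid (Q,f) with port Γ at p_o, if Γ is perfect and X is a minimal qualified set of Γ with x ∈ X, then f(x) ≥ f(p_o). -/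
open Finset

/-- In a polymatroid `(Q,f)` with (perfect) port `Γ` at `p_o`, if `X` is a
minimal qualified set of `Γ` and `x ∈ X`, then `f(x) ≥ f(p_o)`. -/
theorem minimal_qualified_share_bound
    {α : Type*} [DecidableEq α] [Fintype α]
    (f : Finset α → ℝ)
    (hempty : f ∅ = 0)
    (hmono : ∀ X Y : Finset α, X ⊆ Y → f X ≤ f Y)
    (hsubmod : ∀ X Y : Finset α, f (X ∩ Y) + f (X ∪ Y) ≤ f X + f Y)
    (po : α) (hpos : 0 < f {po})
    (Γ : Finset α → ℝ)
    (hΓ : ∀ X : Finset α, Γ X = (f X + f {po} - f (X ∪ {po})) / f {po})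
    (hperfect : ∀ X : Finset α, X ⊆ univ \ {po} → Γ X = 0 ∨ Γ X = 1)
    (X : Finset α) (hX : X ⊆ univ \ {po})
    (hqual : Γ X = 1)
    (hminimal : ∀ y ∈ X, Γ (X \ {y}) = 0)
    (x : α) (hx : x ∈ X) :
    f {po} ≤ f {x} := by
  have hne : f {po} ≠ 0 := ne_of_gt hpos
  -- From Γ X = 1 : f (X ∪ {po}) = f X
  have h1 : f (X ∪ {po}) = f X := by
    have := hΓ X
    rw [hqual] at this
    field_simp at this
    linarith
  -- From Γ (X \ {x}) = 0 : f ((X \ {x}) ∪ {po}) = f (X \ {x}) + f {po}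
  have h2 : f ((X \ {x}) ∪ {po}) = f (X \ {x}) + f {po} := by
    have := hΓ (X \ {x})
    rw [hminimal x hx] at this
    have h0 : f (X \ {x}) + f {po} - f ((X \ {x}) ∪ {po}) = 0 := by
      field_simp at this
      linarith
    linarith
  -- Monotonicity
  have h3 : f ((X \ {x}) ∪ {po}) ≤ f (X ∪ {po}) :=
    hmono _ _ (Finset.union_subset_union_left (Finset.sdiff_subset))
  -- Submodularity on X \ {x} and {x}
  have h4 : f X ≤ f (X \ {x}) + f {x} := by
    have hs := hsubmod (X \ {x}) {x}
    have hint : (X \ {x}) ∩ {x} = ∅ := by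
      ext a; simp (config := {contextual := true}) [Finset.mem_sdiff]
    have huni : (X \ {x}) ∪ {x} = X := by
      rw [Finset.sdiff_union_self_eq_union]
      exact Finset.union_eq_left.mpr (by simpa using hx)
    rw [hint, huni, hempty] at hs
    linarith
  linarith
end
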